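/- arXiv:2202.01288 — 3 statements merged into one kernel-verified Lean document; each statement's English description precedes it below -/
import Mathlib

section
/- Ratio constancy across demonstrators: let p be a distribution on A that is not uniform (i.e., p(a) ≠ 1/n for some a ∈ A), let p' be a distribution on A, and let ρ_1,…,ρ_m, ρ'_1,…,ρ'_m ∈ (0,1]. If noise(p, ρ_i) = noise(p', ρ'_i) for every i ∈ {1,…,m}, then the ratio ρ_i/ρ'_i is independent of i: ρ_i/ρ'_i = ρ_1/ρ'_1 for all i ∈ {1,…,m}. -/
/-- A distribution on a finite action set `A`: nonnegative and summing to 1. -/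
def IsDist {A : Type*} [Fintype A] (p : A → ℝ) : Prop :=
  (∀ a, 0 ≤ p a) ∧ ∑ a, p a = 1

/-- The noised distribution: `noise p ρ (a) = ρ·p(a) + (1−ρ)/n` where `n = |A|`. -/
noncomputable def noise {A : Type*} [Fintype A] (p : A → ℝ) (ρ : ℝ) : A → ℝ :=
  fun a => ρ * p a + (1 - ρ) / (Fintype.card A : ℝ)

/-- Ratio constancy across demonstrators: if `p` is a non-uniform distribution, `p'` a
distribution, and `ρ_i, ρ'_i ∈ (0,1]` satisfy `noise p (ρ_i) = noise p' (ρ'_i)` for all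
`i ∈ {1,…,m}`, then the ratio `ρ_i/ρ'_i` is independent of `i`. -/
theorem noise_ratio_const {A : Type*} [Fintype A] [Nonempty A]
    (p p' : A → ℝ) (hp : IsDist p) (hp' : IsDist p')
    (hnonunif : ∃ a, p a ≠ 1 / (Fintype.card A : ℝ))
    {m : ℕ} (hm : 0 < m)
    (ρ ρ' : Fin m → ℝ)
    (hρ : ∀ i, ρ i ∈ Set.Ioc (0 : ℝ) 1) (hρ' : ∀ i, ρ' i ∈ Set.Ioc (0 : ℝ) 1)
    (heq : ∀ i, noise p (ρ i) = noise p' (ρ' i)) :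
    ∀ i, ρ i / ρ' i = ρ ⟨0, hm⟩ / ρ' ⟨0, hm⟩ := by
  obtain ⟨a, ha⟩ := hnonunif
  set c : ℝ := p a - 1 / (Fintype.card A : ℝ) with hc
  have hcne : c ≠ 0 := sub_ne_zero.mpr ha
  set c' : ℝ := p' a - 1 / (Fintype.card A : ℝ) with hc'
  have key : ∀ i, ρ i * c = ρ' i * c' := by
    intro i
    have h := congrFun (heq i) a
    simp only [noise] at h
    have hn : (Fintype.card A : ℝ) ≠ 0 := by
      exact_mod_cast Fintype.card_ne_zero
    field_simp [hc, hc']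
    ring_nf
    ring_nf at h
    field_simp at h
    rw [hc, hc']
    field_simp
    linarith [h]
  intro i
  have h1 := key i
  have h0 := key ⟨0, hm⟩
  have hρ'i : ρ' i ≠ 0 := ne_of_gt (hρ' i).1
  have hρ'0 : ρ' ⟨0, hm⟩ ≠ 0 := ne_of_gt (hρ' ⟨0, hm⟩).1
  rw [div_eq_div_iff hρ'i hρ'0]
  have : (ρ i * ρ' ⟨0, hm⟩) * c = (ρ ⟨0, hm⟩ * ρ' i) * c := by
    calc (ρ i * ρ' ⟨0, hm⟩) * c = ρ' ⟨0, hm⟩ * (ρ i * c) := by ring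
    _ = ρ' ⟨0, hm⟩ * (ρ' i * c') := by rw [h1]
    _ = ρ' i * (ρ' ⟨0, hm⟩ * c') := by ring
    _ = ρ' i * (ρ ⟨0, hm⟩ * c) := by rw [← h0]
    _ = (ρ ⟨0, hm⟩ * ρ' i) * c := by ring
  exact mul_right_cancel₀ hcne this
end

section
/- Value of the minimal loss: in the demonstrator-model setup, the infimum over all candidate pairs (q, r), with q a policy and r : {1,…,m} × S → (0,1), of NLL(q, r) equals ∑_{i,s} w(i,s) · H(noise(π*(·|s), ρ*(i,s))), the weighted conditional entropy of the demonstrators' action distributions, and this value is attained at the true pair (q, r) = (π*, ρ*). -/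
/-- The negative log-likelihood of a candidate policy `q` and candidate expertise levels `r`. -/
noncomputable def NLL {S A : Type*} [Fintype S] [Fintype A] {m : ℕ}
    (πstar : S → A → ℝ) (ρstar : Fin m → S → ℝ) (w : Fin m → S → ℝ)
    (q : S → A → ℝ) (r : Fin m → S → ℝ) : ℝ :=
  -∑ i, ∑ s, w i s *
    ∑ a, noise (πstar s) (ρstar i s) a * Real.log (noise (q s) (r i s) a)

/-- Shannon entropy of a distribution on a finite set (with the convention `0·log 0 = 0`,
which holds automatically since `Real.log 0 = 0`). -/
noncomputable def shannonH {A : Type*} [Fintype A] (p : A → ℝ) : ℝ :=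
  -∑ a, p a * Real.log (p a)

lemma noise_pos {A : Type*} [Fintype A] [Nonempty A] {p : A → ℝ} (hp : ∀ a, 0 ≤ p a)
    {ρ : ℝ} (hρ : ρ ∈ Set.Ioo (0 : ℝ) 1) (a : A) : 0 < noise p ρ a := by
  have hn : (0 : ℝ) < (Fintype.card A : ℝ) := by exact_mod_cast Fintype.card_pos
  have h1 : 0 ≤ ρ * p a := mul_nonneg hρ.1.le (hp a)
  have h2 : 0 < (1 - ρ) / (Fintype.card A : ℝ) := div_pos (by linarith [hρ.2]) hn
  unfold noise; linarith

lemma noise_sum {A : Type*} [Fintype A] [Nonempty A] {p : A → ℝ} (hp : ∑ a, p a = 1)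
    (ρ : ℝ) : ∑ a, noise p ρ a = 1 := by
  have hn : (Fintype.card A : ℝ) ≠ 0 := by
    exact_mod_cast Fintype.card_ne_zero
  simp only [noise, Finset.sum_add_distrib, ← Finset.mul_sum, hp,
    Finset.sum_const, Finset.card_univ, nsmul_eq_mul]
  field_simp
  ring

lemma gibbs {A : Type*} [Fintype A] {p q : A → ℝ} (hp : ∀ a, 0 < p a) (hq : ∀ a, 0 < q a)
    (hps : ∑ a, p a = 1) (hqs : ∑ a, q a = 1) :
    ∑ a, p a * Real.log (q a) ≤ ∑ a, p a * Real.log (p a) := by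
  have key : ∀ a : A, p a * Real.log (q a) - p a * Real.log (p a) ≤ q a - p a := by
    intro a
    have h1 : Real.log (q a) - Real.log (p a) = Real.log (q a / p a) :=
      (Real.log_div (hq a).ne' (hp a).ne').symm
    have h2 : Real.log (q a / p a) ≤ q a / p a - 1 :=
      Real.log_le_sub_one_of_pos (div_pos (hq a) (hp a))
    have h3 := mul_le_mul_of_nonneg_left h2 (hp a).le
    have h4 : p a * (q a / p a - 1) = q a - p a := by
      field_simp [(hp a).ne']
    calc p a * Real.log (q a) - p a * Real.log (p a)
        = p a * Real.log (q a / p a) := by rw [← mul_sub, h1]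
      _ ≤ p a * (q a / p a - 1) := h3
      _ = q a - p a := h4
  have hsum : ∑ a, (p a * Real.log (q a) - p a * Real.log (p a)) ≤ ∑ a, (q a - p a) :=
    Finset.sum_le_sum fun a _ => key a
  have : ∑ a, (q a - p a) = 0 := by rw [Finset.sum_sub_distrib, hps, hqs]; ring
  rw [Finset.sum_sub_distrib] at hsum
  linarith

/-- Value of the minimal loss: the infimum over all candidate pairs `(q, r)` of `NLL(q,r)`
equals the weighted conditional entropy `∑_{i,s} w(i,s) · H(noise(π*(·|s), ρ*(i,s)))`,
and this value is attained at the true pair `(π*, ρ*)`. -/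
theorem min_loss_value {S A : Type*} [Fintype S] [Fintype A] [Nonempty S] [Nonempty A]
    {m : ℕ} (hm : 1 ≤ m)
    (πstar : S → A → ℝ) (hπ : ∀ s, IsDist (πstar s))
    (ρstar : Fin m → S → ℝ) (hρ : ∀ i s, ρstar i s ∈ Set.Ioo (0 : ℝ) 1)
    (w : Fin m → S → ℝ) (hw : ∀ i s, 0 ≤ w i s) (hw1 : ∑ i, ∑ s, w i s = 1) :
    (⨅ qr : {qr : (S → A → ℝ) × (Fin m → S → ℝ) //
        (∀ s, IsDist (qr.1 s)) ∧ ∀ i s, qr.2 i s ∈ Set.Ioo (0 : ℝ) 1},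
      NLL πstar ρstar w qr.1.1 qr.1.2) =
      ∑ i, ∑ s, w i s * shannonH (noise (πstar s) (ρstar i s)) ∧
    NLL πstar ρstar w πstar ρstar =
      ∑ i, ∑ s, w i s * shannonH (noise (πstar s) (ρstar i s)) := by
  haveI : Nonempty {qr : (S → A → ℝ) × (Fin m → S → ℝ) //
      (∀ s, IsDist (qr.1 s)) ∧ ∀ i s, qr.2 i s ∈ Set.Ioo (0 : ℝ) 1} :=
    ⟨⟨⟨πstar, ρstar⟩, hπ, hρ⟩⟩
  set E := ∑ i, ∑ s, w i s * shannonH (noise (πstar s) (ρstar i s)) with hE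
  have heq : NLL πstar ρstar w πstar ρstar = E := by
    simp [NLL, shannonH, mul_neg, hE, Finset.sum_neg_distrib]
  have key : ∀ qr : {qr : (S → A → ℝ) × (Fin m → S → ℝ) //
      (∀ s, IsDist (qr.1 s)) ∧ ∀ i s, qr.2 i s ∈ Set.Ioo (0 : ℝ) 1},
      E ≤ NLL πstar ρstar w qr.1.1 qr.1.2 := by
    rintro ⟨⟨q, r⟩, hq, hr⟩
    have hE' : E = -∑ i, ∑ s, w i s *
        ∑ a, noise (πstar s) (ρstar i s) a * Real.log (noise (πstar s) (ρstar i s) a) := by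
      rw [← heq]; rfl
    rw [hE', NLL, neg_le_neg_iff]
    refine Finset.sum_le_sum fun i _ => Finset.sum_le_sum fun s _ => ?_
    refine mul_le_mul_of_nonneg_left ?_ (hw i s)
    exact gibbs (noise_pos (hπ s).1 (hρ i s)) (noise_pos (hq s).1 (hr i s))
      (noise_sum (hπ s).2 _) (noise_sum (hq s).2 _)
  refine ⟨le_antisymm ?_ (le_ciInf key), heq⟩
  have hbdd : BddBelow (Set.range fun qr : {qr : (S → A → ℝ) × (Fin m → S → ℝ) //
      (∀ s, IsDist (qr.1 s)) ∧ ∀ i s, qr.2 i s ∈ Set.Ioo (0 : ℝ) 1} =>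
      NLL πstar ρstar w qr.1.1 qr.1.2) := by
    refine ⟨E, ?_⟩
    rintro x ⟨qr, rfl⟩
    exact key qr
  have := ciInf_le hbdd ⟨⟨πstar, ρstar⟩, hπ, hρ⟩
  simpa [heq] using this
end

section
/- Identifiability step of Lemma 3.4: fix d ∈ ℕ, a state embedding f : S → ℝ^d, and true demonstrator embeddings ω*_1,…,ω*_m ∈ ℝ^d, so that the true expertise of demonstrator i at state s is ρ*(i,s) = σ(⟨f(s), ω*_i⟩) ∈ (0,1). Fix s_0 ∈ S, and suppose there exist states s_1,…,s_r ∈ S and reals α_1,…,α_r with f(s_0) = ∑_{k=1}^r α_k · f(s_k), such that π*(·|s) is not the uniform distribution for each s ∈ {s_0, s_1, …, s_r}. Suppose further that no real constants C_0, C_1, …, C_r with C_0 ≠ 1 satisfy both ρ*(i,s_k)/C_k ∈ (0,1) for all i ∈ {1,…,m} and k ∈ {0,…,r}, and logit(ρ*(i,s_0)/C_0) = ∑_{k=1}^r α_k · logit(ρ*(i,s_k)/C_k) for all i ∈ {1,…,m}. Then for every candidate policy q and every collection of embeddings ω'_1,…,ω'_m ∈ ℝ^d: if noise(q(·|s), σ(⟨f(s),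 ω'_i⟩)) = noise(π*(·|s), σ(⟨f(s), ω*_i⟩)) for all i ∈ {1,…,m} and all s ∈ {s_0, s_1, …, s_r}, then q(·|s_0) = π*(·|s_0). -/
/-- The sigmoid function `σ(x) = 1/(1 + exp(−x))`, taking values in `(0,1)`. -/
noncomputable def sigmoid (x : ℝ) : ℝ := 1 / (1 + Real.exp (-x))

/-- The logit function `logit(y) = log(y/(1−y))`, the inverse of the sigmoid on `(0,1)`. -/
noncomputable def logit (y : ℝ) : ℝ := Real.log (y / (1 - y))


lemma sigmoid_mem (x : ℝ) : sigmoid x ∈ Set.Ioo (0 : ℝ) 1 := by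
  have h := Real.exp_pos (-x)
  constructor
  · unfold sigmoid; positivity
  · unfold sigmoid
    rw [div_lt_one (by linarith)]
    linarith

lemma logit_sigmoid (x : ℝ) : logit (sigmoid x) = x := by
  have h := Real.exp_pos (-x)
  have h1 : (0:ℝ) < 1 + Real.exp (-x) := by linarith
  have hs : sigmoid x / (1 - sigmoid x) = Real.exp x := by
    unfold sigmoid
    have : (1:ℝ) - 1 / (1 + Real.exp (-x)) = Real.exp (-x) / (1 + Real.exp (-x)) := by
      field_simp
      ring
    rw [this]
    have he : Real.exp x * Real.exp (-x) = 1 := by rw [← Real.exp_add]; simp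
    rw [div_div_div_eq, one_mul, eq_comm, eq_div_iff (by positivity)]
    linear_combination (1 + Real.exp (-x)) * he
  unfold logit
  rw [hs, Real.log_exp]

/-- Identifiability step of Lemma 3.4: if `f(s_0)` is a linear combination of
`f(s_1),…,f(s_r)`, the true policy is non-uniform at each of `s_0,…,s_r`, and no constants
`C_0,…,C_r` with `C_0 ≠ 1` satisfy both `ρ*(i,s_k)/C_k ∈ (0,1)` for all `i, k` and
`logit(ρ*(i,s_0)/C_0) = ∑_k α_k·logit(ρ*(i,s_k)/C_k)` for all `i`, then any candidate pair
(policy `q`, embeddings `ω'`) matching the demonstrators' noised distributions on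
`{s_0, s_1, …, s_r}` must satisfy `q(·|s_0) = π*(·|s_0)`.
Here `ρ*(i,s) = σ(⟨f(s), ω*_i⟩)`. -/
theorem identifiability_step {S A : Type*} [Fintype S] [Fintype A] [Nonempty S] [Nonempty A]
    {m d r : ℕ} (hm : 1 ≤ m)
    (πstar : S → A → ℝ) (hπ : ∀ s, IsDist (πstar s))
    (f : S → Fin d → ℝ) (ωstar : Fin m → Fin d → ℝ)
    (s₀ : S) (t : Fin r → S) (α : Fin r → ℝ)
    (hlin : ∀ j, f s₀ j = ∑ k, α k * f (t k) j)
    (hnu₀ : ∃ a, πstar s₀ a ≠ 1 / (Fintype.card A : ℝ))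
    (hnut : ∀ k, ∃ a, πstar (t k) a ≠ 1 / (Fintype.card A : ℝ))
    (hC : ¬ ∃ (C₀ : ℝ) (C : Fin r → ℝ), C₀ ≠ 1 ∧
      (∀ i, sigmoid (∑ j, f s₀ j * ωstar i j) / C₀ ∈ Set.Ioo (0 : ℝ) 1) ∧
      (∀ i k, sigmoid (∑ j, f (t k) j * ωstar i j) / C k ∈ Set.Ioo (0 : ℝ) 1) ∧
      (∀ i, logit (sigmoid (∑ j, f s₀ j * ωstar i j) / C₀) =
        ∑ k, α k * logit (sigmoid (∑ j, f (t k) j * ωstar i j) / C k))) :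
    ∀ (q : S → A → ℝ), (∀ s, IsDist (q s)) →
    ∀ ω' : Fin m → Fin d → ℝ,
      (∀ i, noise (q s₀) (sigmoid (∑ j, f s₀ j * ω' i j)) =
        noise (πstar s₀) (sigmoid (∑ j, f s₀ j * ωstar i j))) →
      (∀ i k, noise (q (t k)) (sigmoid (∑ j, f (t k) j * ω' i j)) =
        noise (πstar (t k)) (sigmoid (∑ j, f (t k) j * ωstar i j))) →
      q s₀ = πstar s₀ := by
  intro q hq ω' h0 ht
  set n : ℝ := (Fintype.card A : ℝ) with hn_def
  have hn : (0:ℝ) < n := by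
    simp only [hn_def]
    exact_mod_cast Fintype.card_pos
  have hn0 : n ≠ 0 := ne_of_gt hn
  -- ρ notation
  set ρ : Fin m → ℝ := fun i => sigmoid (∑ j, f s₀ j * ωstar i j) with hρ
  set ρ' : Fin m → ℝ := fun i => sigmoid (∑ j, f s₀ j * ω' i j) with hρ'
  set ρt : Fin m → Fin r → ℝ := fun i k => sigmoid (∑ j, f (t k) j * ωstar i j) with hρt
  set ρt' : Fin m → Fin r → ℝ := fun i k => sigmoid (∑ j, f (t k) j * ω' i j) with hρt'
  have hρpos : ∀ i, 0 < ρ i := fun i => (sigmoid_mem _).1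
  have hρ'mem : ∀ i, ρ' i ∈ Set.Ioo (0:ℝ) 1 := fun i => sigmoid_mem _
  have hρtpos : ∀ i k, 0 < ρt i k := fun i k => (sigmoid_mem _).1
  have hρt'mem : ∀ i k, ρt' i k ∈ Set.Ioo (0:ℝ) 1 := fun i k => sigmoid_mem _
  -- key identities
  have key0 : ∀ i a, ρ' i * (n * q s₀ a - 1) = ρ i * (n * πstar s₀ a - 1) := by
    intro i a
    have h := congrFun (h0 i) a
    simp only [noise] at h
    have h2 : ρ' i * q s₀ a * n + (1 - ρ' i) = ρ i * πstar s₀ a * n + (1 - ρ i) := by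
      field_simp at h
      linarith
    ring_nf
    ring_nf at h2
    linarith
  have keyt : ∀ i k a, ρt' i k * (n * q (t k) a - 1) = ρt i k * (n * πstar (t k) a - 1) := by
    intro i k a
    have h := congrFun (ht i k) a
    simp only [noise] at h
    have h2 : ρt' i k * q (t k) a * n + (1 - ρt' i k)
        = ρt i k * πstar (t k) a * n + (1 - ρt i k) := by
      field_simp at h
      linarith
    ring_nf
    ring_nf at h2
    linarith
  -- choose witnesses of non-uniformity
  obtain ⟨a₀, ha₀⟩ := hnu₀
  have hX0 : n * πstar s₀ a₀ - 1 ≠ 0 := by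
    intro h
    apply ha₀
    field_simp
    linarith
  choose at_ hat using hnut
  have hXt : ∀ k, n * πstar (t k) (at_ k) - 1 ≠ 0 := by
    intro k h
    apply hat k
    field_simp
    linarith
  -- define the constants
  set C₀ : ℝ := (n * q s₀ a₀ - 1) / (n * πstar s₀ a₀ - 1) with hC₀def
  set C : Fin r → ℝ := fun k => (n * q (t k) (at_ k) - 1) / (n * πstar (t k) (at_ k) - 1)
    with hCdef
  have i₀ : Fin m := ⟨0, hm⟩
  have hX0' : ∀ (i : Fin m), n * q s₀ a₀ - 1 ≠ 0 := by
    intro i h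
    have := key0 i a₀
    rw [h, mul_zero] at this
    exact hX0 (by
      have := mul_eq_zero.mp this.symm
      rcases this with h1 | h1
      · exact absurd h1 (ne_of_gt (hρpos i))
      · exact h1)
  have hXt' : ∀ (i : Fin m) (k : Fin r), n * q (t k) (at_ k) - 1 ≠ 0 := by
    intro i k h
    have := keyt i k (at_ k)
    rw [h, mul_zero] at this
    exact hXt k (by
      have := mul_eq_zero.mp this.symm
      rcases this with h1 | h1
      · exact absurd h1 (ne_of_gt (hρtpos i k))
      · exact h1)
  -- ρ' i = ρ i / C₀
  have hdiv0 : ∀ i, ρ i / C₀ = ρ' i := by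
    intro i
    have hk := key0 i a₀
    rw [hC₀def]
    rw [div_div_eq_mul_div]
    rw [div_eq_iff (hX0' i)]
    linarith [hk]
  have hdivt : ∀ i k, ρt i k / C k = ρt' i k := by
    intro i k
    have hk := keyt i k (at_ k)
    simp only [hCdef]
    rw [div_div_eq_mul_div]
    rw [div_eq_iff (hXt' i k)]
    linarith [hk]
  -- logit identity
  have hlogit : ∀ i, logit (ρ i / C₀) = ∑ k, α k * logit (ρt i k / C k) := by
    intro i
    rw [hdiv0 i]
    have h1 : logit (ρ' i) = ∑ j, f s₀ j * ω' i j := logit_sigmoid _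
    rw [h1]
    have h2 : ∀ k, logit (ρt i k / C k) = ∑ j, f (t k) j * ω' i j := by
      intro k
      rw [hdivt i k]
      exact logit_sigmoid _
    calc ∑ j, f s₀ j * ω' i j
        = ∑ j, (∑ k, α k * f (t k) j) * ω' i j := by
          refine Finset.sum_congr rfl fun j _ => ?_
          rw [← hlin j]
      _ = ∑ j, ∑ k, α k * (f (t k) j * ω' i j) := by
          refine Finset.sum_congr rfl fun j _ => ?_
          rw [Finset.sum_mul]
          refine Finset.sum_congr rfl fun k _ => by ring
      _ = ∑ k, ∑ j, α k * (f (t k) j * ω' i j) := Finset.sum_comm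
      _ = ∑ k, α k * logit (ρt i k / C k) := by
          refine Finset.sum_congr rfl fun k _ => ?_
          rw [h2 k, Finset.mul_sum]
  -- conclude C₀ = 1
  have hC₀1 : C₀ = 1 := by
    by_contra hne
    exact hC ⟨C₀, C, hne,
      fun i => by rw [hdiv0 i]; exact hρ'mem i,
      fun i k => by rw [hdivt i k]; exact hρt'mem i k,
      fun i => hlogit i⟩
  -- so ρ' = ρ, and q s₀ = πstar s₀
  have i := i₀
  have hρeq : ρ' i = ρ i := by
    have := hdiv0 i
    rw [hC₀1, div_one] at this
    exact this.symm
  funext a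
  have hk := key0 i a
  rw [hρeq] at hk
  have := mul_left_cancel₀ (ne_of_gt (hρpos i)) hk
  have : n * q s₀ a = n * πstar s₀ a := by linarith
  exact mul_left_cancel₀ hn0 this
end
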